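/- arXiv:2207.02808 — 4 statements merged into one kernel-verified Lean document; each statement's English description precedes it below -/
import Mathlib

section
/- Let α ∈ (0,1) and let s₁, …, s_{n}, s_{n+1} be exchangeable real-valued random variables (e.g., i.i.d.). Define q̂ to be the ⌈(n+1)(1−α)⌉-th smallest value among s₁, …, s_n (with q̂ = +∞ if ⌈(n+1)(1−α)⌉ > n). Then P(s_{n+1} ≤ q̂) ≥ 1 − α. -/
open MeasureTheory

/-- The `k`-th smallest element (1-indexed) of a multiset of reals. -/
noncomputable def kthSmallest (m : Multiset ℝ) (k : ℕ) : ℝ :=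
  (m.sort (· ≤ ·)).getD (k - 1) 0

lemma sorted_getD_lt_iff (x : ℝ) :
    ∀ (l : List ℝ), l.Pairwise (· ≤ ·) → ∀ i, i < l.length →
      (l.getD i 0 < x ↔ i < l.countP (fun a => decide (a < x))) := by
  intro l
  induction l with
  | nil => intro _ i hi; simp at hi
  | cons a t ih =>
    intro hsort i hi
    have hat : ∀ b ∈ t, a ≤ b := fun b hb => (List.pairwise_cons.1 hsort).1 b hb
    have hts : t.Pairwise (· ≤ ·) := (List.pairwise_cons.1 hsort).2
    have hcz : ¬ a < x → t.countP (fun a => decide (a < x)) = 0 := by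
      intro hax
      rw [List.countP_eq_zero]
      intro b hb
      simp only [decide_eq_true_eq]
      exact fun hbx => hax (lt_of_le_of_lt (hat b hb) hbx)
    rw [List.countP_cons]
    cases i with
    | zero =>
      simp only [List.getD_cons_zero]
      constructor
      · intro hax; simp [hax]
      · intro h
        by_contra hax
        rw [hcz hax] at h
        simp [hax] at h
    | succ i =>
      simp only [List.getD_cons_succ]
      have hit : i < t.length := by simpa using hi
      rw [ih hts i hit]
      by_cases hax : a < x
      · simp [hax]
      · rw [hcz hax]
        simp [hax]

lemma le_kthSmallest_iff (m : Multiset ℝ) (k : ℕ) (hk1 : 1 ≤ k) (hk2 : k ≤ Multiset.card m)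
    (x : ℝ) : x ≤ kthSmallest m k ↔ m.countP (fun a => a < x) < k := by
  set l := m.sort (· ≤ ·) with hl
  have hlen : l.length = Multiset.card m := Multiset.length_sort _
  have hcount : m.countP (fun a => a < x) = l.countP (fun a => decide (a < x)) := by
    conv_lhs => rw [← Multiset.sort_eq m (· ≤ ·)]
    rfl
  have hi : k - 1 < l.length := by omega
  have h := sorted_getD_lt_iff x l (Multiset.pairwise_sort m _) (k-1) hi
  rw [kthSmallest, ← hl, hcount]
  constructor
  · intro hx
    have : ¬ (k - 1 < l.countP (fun a => decide (a < x))) := fun hc => absurd (h.2 hc) (not_lt.2 hx)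
    omega
  · intro hc
    have : ¬ (l.getD (k-1) 0 < x) := fun hlt => by have := h.1 hlt; omega
    exact not_lt.1 this

lemma kthSmallest_count_le (m : Multiset ℝ) (k : ℕ) (hk1 : 1 ≤ k) (hk2 : k ≤ Multiset.card m) :
    k ≤ m.countP (fun a => a ≤ kthSmallest m k) := by
  set t := kthSmallest m k with ht
  have hcount : m.countP (fun a => a ≤ t) = (m.sort (· ≤ ·)).countP (fun a => decide (a ≤ t)) := by
    conv_lhs => rw [← Multiset.sort_eq m (· ≤ ·)]
    rfl
  rw [hcount]
  have hlen : (m.sort (· ≤ ·)).length = Multiset.card m := Multiset.length_sort _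
  rw [kthSmallest] at ht
  suffices h : ∀ (l : List ℝ), l.Pairwise (· ≤ ·) → ∀ j, j < l.length →
      j + 1 ≤ l.countP (fun a => decide (a ≤ l.getD j 0)) by
    have := h (m.sort (· ≤ ·)) (Multiset.pairwise_sort m _) (k-1) (by omega)
    rw [← ht] at this
    omega
  intro l
  induction l with
  | nil => intro _ j hj; simp at hj
  | cons a u ih =>
    intro hsort j hj
    have hau : ∀ b ∈ u, a ≤ b := fun b hb => (List.pairwise_cons.1 hsort).1 b hb
    have hus : u.Pairwise (· ≤ ·) := (List.pairwise_cons.1 hsort).2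
    rw [List.countP_cons]
    cases j with
    | zero =>
      simp only [List.getD_cons_zero]
      simp
    | succ j =>
      have hju : j < u.length := by simpa using hj
      simp only [List.getD_cons_succ]
      have h1 := ih hus j hju
      have ha : a ≤ u.getD j 0 := by
        have : u.getD j 0 ∈ u := by
          rw [List.getD_eq_getElem _ _ hju]
          exact List.getElem_mem _
        exact hau _ this
      simp only [decide_eq_true_eq]
      rw [if_pos ha]
      omega

lemma countP_map_univ {N : ℕ} (f : Fin N → ℝ) (p : ℝ → Prop) [DecidablePred p] :
    (Finset.univ.val.map f).countP p = (Finset.univ.filter (fun i => p (f i))).card := by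
  rw [Multiset.countP_map]
  rfl

lemma pointwise_count {N k : ℕ} (hk1 : 1 ≤ k) (hk2 : k ≤ N) (x : Fin N → ℝ) :
    k ≤ (Finset.univ.filter
      (fun i => (Finset.univ.filter (fun j => x j < x i)).card < k)).card := by
  classical
  set M := Finset.univ.val.map x with hM
  have hcard : Multiset.card M = N := by simp [hM]
  set t := kthSmallest M k with ht
  have h1 : k ≤ M.countP (fun a => a ≤ t) := kthSmallest_count_le M k hk1 (by omega)
  have h2 : M.countP (fun a => a < t) < k :=
    (le_kthSmallest_iff M k hk1 (by omega) t).1 le_rfl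
  rw [countP_map_univ] at h1
  rw [countP_map_univ] at h2
  refine le_trans h1 (Finset.card_le_card ?_)
  intro i hi
  simp only [Finset.mem_filter, Finset.mem_univ, true_and] at hi ⊢
  refine lt_of_le_of_lt (Finset.card_le_card ?_) h2
  intro j hj
  simp only [Finset.mem_filter, Finset.mem_univ, true_and] at hj ⊢
  exact lt_of_lt_of_le hj hi

lemma aux_coverage {Ω : Type*} [MeasurableSpace Ω] (μ : Measure Ω) [IsProbabilityMeasure μ]
    (n k : ℕ) (hk1 : 1 ≤ k) (hk2 : k ≤ n + 1)
    (s : Fin (n + 1) → Ω → ℝ) (hs : ∀ i, Measurable (s i))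
    (hexch : ∀ σ : Equiv.Perm (Fin (n + 1)),
      Measure.map (fun ω => fun i => s (σ i) ω) μ
        = Measure.map (fun ω => fun i => s i ω) μ) :
    (k : ENNReal) ≤ ((n : ENNReal) + 1) *
      μ {ω | (Finset.univ.filter (fun j => s j ω < s (Fin.last n) ω)).card < k} := by
  have hvec : Measurable (fun ω => fun i => s i ω) := measurable_pi_lambda _ hs
  have hAmeas : ∀ i : Fin (n+1), MeasurableSet
      {x : Fin (n+1) → ℝ | (Finset.univ.filter (fun j => x j < x i)).card < k} := by
    intro i
    have hf : Measurable (fun x : Fin (n+1) → ℝ =>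
        (Finset.univ.filter (fun j => x j < x i)).card) := by
      simp only [Finset.card_filter]
      exact Finset.measurable_sum _ (fun j _ => Measurable.ite
        (measurableSet_lt (measurable_pi_apply j) (measurable_pi_apply i))
        measurable_const measurable_const)
    exact hf measurableSet_Iio
  have hEmeas : ∀ i : Fin (n+1), MeasurableSet
      {ω | (Finset.univ.filter (fun j => s j ω < s i ω)).card < k} := by
    intro i
    exact hvec (hAmeas i)
  have h_eq : ∀ i : Fin (n+1),
      μ {ω | (Finset.univ.filter (fun j => s j ω < s i ω)).card < k}
        = μ {ω | (Finset.univ.filter (fun j => s j ω < s (Fin.last n) ω)).card < k} := by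
    intro i
    set σ := Equiv.swap i (Fin.last n) with hσ
    have hmapm : Measurable (fun ω => fun j => s (σ j) ω) :=
      measurable_pi_lambda _ (fun j => hs _)
    have h1 : μ {ω | (Finset.univ.filter (fun j => s j ω < s (Fin.last n) ω)).card < k}
        = Measure.map (fun ω => fun i => s i ω) μ
            {x : Fin (n+1) → ℝ | (Finset.univ.filter (fun j => x j < x (Fin.last n))).card < k} := by
      rw [Measure.map_apply hvec (hAmeas _)]
      rfl
    have h2 : Measure.map (fun ω => fun j => s (σ j) ω) μ
          {x : Fin (n+1) → ℝ | (Finset.univ.filter (fun j => x j < x (Fin.last n))).card < k}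
        = μ ((fun ω => fun j => s (σ j) ω) ⁻¹'
            {x : Fin (n+1) → ℝ | (Finset.univ.filter (fun j => x j < x (Fin.last n))).card < k}) :=
      Measure.map_apply hmapm (hAmeas _)
    have h3 : (fun ω => fun j => s (σ j) ω) ⁻¹'
          {x : Fin (n+1) → ℝ | (Finset.univ.filter (fun j => x j < x (Fin.last n))).card < k}
        = {ω | (Finset.univ.filter (fun j => s j ω < s i ω)).card < k} := by
      ext ω
      simp only [Set.mem_preimage, Set.mem_setOf_eq]
      have hσlast : σ (Fin.last n) = i := Equiv.swap_apply_right _ _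
      simp only [hσlast]
      have hc : (Finset.univ.filter (fun j => s (σ j) ω < s i ω)).card
          = (Finset.univ.filter (fun j => s j ω < s i ω)).card := by
        rw [Finset.card_filter, Finset.card_filter]
        exact Fintype.sum_equiv σ _ _ (fun j => rfl)
      rw [hc]
    rw [h1, ← hexch σ, h2, h3]
  have hEcount : ∀ ω, k ≤ (Finset.univ.filter (fun i : Fin (n+1) =>
      (Finset.univ.filter (fun j => s j ω < s i ω)).card < k)).card := by
    intro ω
    exact pointwise_count hk1 hk2 (fun i => s i ω)
  have hsum : (k : ENNReal) ≤ ∑ i : Fin (n+1),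
      μ {ω | (Finset.univ.filter (fun j => s j ω < s i ω)).card < k} := by
    calc (k:ENNReal) = ∫⁻ _, (k:ENNReal) ∂μ := by rw [lintegral_const, measure_univ, mul_one]
      _ ≤ ∫⁻ ω, ∑ i : Fin (n+1),
          ({ω | (Finset.univ.filter (fun j => s j ω < s i ω)).card < k}).indicator
            (fun _ => (1:ENNReal)) ω ∂μ := by
          apply lintegral_mono
          intro ω
          have h1 := hEcount ω
          calc (k:ENNReal) ≤ ((Finset.univ.filter (fun i : Fin (n+1) =>
                (Finset.univ.filter (fun j => s j ω < s i ω)).card < k)).card : ENNReal) := by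
                exact_mod_cast h1
            _ = _ := by
                rw [Finset.card_filter]
                push_cast
                refine Finset.sum_congr rfl (fun i _ => ?_)
                by_cases h : (Finset.univ.filter (fun j => s j ω < s i ω)).card < k
                · simp [Set.indicator_apply, h]
                · simp [Set.indicator_apply, h]
      _ = ∑ i : Fin (n+1), ∫⁻ ω,
            ({ω | (Finset.univ.filter (fun j => s j ω < s i ω)).card < k}).indicator
              (fun _ => (1:ENNReal)) ω ∂μ :=
          lintegral_finset_sum _ (fun i _ => measurable_const.indicator (hEmeas i))
      _ = ∑ i : Fin (n+1), μ {ω | (Finset.univ.filter (fun j => s j ω < s i ω)).card < k} :=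
          Finset.sum_congr rfl (fun i _ => lintegral_indicator_one (hEmeas i))
  calc (k:ENNReal)
      ≤ ∑ i : Fin (n+1), μ {ω | (Finset.univ.filter (fun j => s j ω < s i ω)).card < k} := hsum
    _ = ∑ _i : Fin (n+1), μ {ω | (Finset.univ.filter (fun j => s j ω < s (Fin.last n) ω)).card < k} :=
        Finset.sum_congr rfl (fun i _ => h_eq i)
    _ = ((n : ENNReal) + 1) *
        μ {ω | (Finset.univ.filter (fun j => s j ω < s (Fin.last n) ω)).card < k} := by
        rw [Finset.sum_const, Finset.card_univ, Fintype.card_fin, nsmul_eq_mul]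
        push_cast
        ring

/-- Marginal coverage guarantee of inductive conformal prediction: if the scores
`s 0, …, s n` (the first `n` being calibration scores, `s (Fin.last n)` the test score)
are exchangeable, and `q̂` is the `⌈(n+1)(1-α)⌉`-th smallest calibration score
(`+∞` if `⌈(n+1)(1-α)⌉ > n`), then `P(s_{n+1} ≤ q̂) ≥ 1 - α`. -/
theorem conformal_marginal_coverage
    {Ω : Type*} [MeasurableSpace Ω] (μ : Measure Ω) [IsProbabilityMeasure μ]
    (n : ℕ) (α : ℝ) (hα : α ∈ Set.Ioo (0 : ℝ) 1)
    (s : Fin (n + 1) → Ω → ℝ) (hs : ∀ i, Measurable (s i))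
    (hexch : ∀ σ : Equiv.Perm (Fin (n + 1)),
      Measure.map (fun ω => fun i => s (σ i) ω) μ
        = Measure.map (fun ω => fun i => s i ω) μ) :
    μ {ω | ((s (Fin.last n) ω : ℝ) : EReal) ≤
        (if ⌈((n : ℝ) + 1) * (1 - α)⌉₊ ≤ n
          then ((kthSmallest
              (Finset.univ.val.map (fun i : Fin n => s (Fin.castSucc i) ω))
              ⌈((n : ℝ) + 1) * (1 - α)⌉₊ : ℝ) : EReal)
          else (⊤ : EReal))}
      ≥ ENNReal.ofReal (1 - α) := by
  obtain ⟨hα0, hα1⟩ := hα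
  set k := ⌈((n : ℝ) + 1) * (1 - α)⌉₊ with hkdef
  have hpos : (0:ℝ) < ((n:ℝ) + 1) * (1 - α) := by
    have h1 : (0:ℝ) < (n:ℝ) + 1 := by positivity
    have h2 : (0:ℝ) < 1 - α := by linarith
    positivity
  have hk1 : 1 ≤ k := Nat.ceil_pos.2 hpos
  have hkle : ((n:ℝ) + 1) * (1 - α) ≤ (k:ℝ) := Nat.le_ceil _
  by_cases hcase : k ≤ n
  · simp only [if_pos hcase]
    -- identify the event with the rank event
    have hset : {ω | ((s (Fin.last n) ω : ℝ) : EReal) ≤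
          ((kthSmallest (Finset.univ.val.map (fun i : Fin n => s (Fin.castSucc i) ω)) k : ℝ) : EReal)}
        = {ω | (Finset.univ.filter (fun j : Fin (n+1) => s j ω < s (Fin.last n) ω)).card < k} := by
      ext ω
      simp only [Set.mem_setOf_eq, EReal.coe_le_coe_iff]
      rw [le_kthSmallest_iff _ k hk1 (by simpa using hcase)]
      rw [countP_map_univ]
      have hc : (Finset.univ.filter (fun i : Fin n => s (Fin.castSucc i) ω < s (Fin.last n) ω)).card
          = (Finset.univ.filter (fun j : Fin (n+1) => s j ω < s (Fin.last n) ω)).card := by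
        rw [Finset.card_filter, Finset.card_filter, Fin.sum_univ_castSucc]
        simp
      rw [hc]
    rw [hset]
    have hkey := aux_coverage μ n k hk1 (by omega) s hs hexch
    have hne0 : ((n : ENNReal) + 1) ≠ 0 := by
      simp
    have hnetop : ((n : ENNReal) + 1) ≠ ⊤ :=
      ENNReal.add_ne_top.2 ⟨ENNReal.natCast_ne_top n, ENNReal.one_ne_top⟩
    have hstep : ((n : ENNReal) + 1) * ENNReal.ofReal (1 - α)
        ≤ ((n : ENNReal) + 1) *
          μ {ω | (Finset.univ.filter (fun j : Fin (n+1) => s j ω < s (Fin.last n) ω)).card < k} := by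
      refine le_trans ?_ hkey
      have e1 : ((n : ENNReal) + 1) = ENNReal.ofReal ((n:ℝ) + 1) := by
        rw [ENNReal.ofReal_add (by positivity) zero_le_one, ENNReal.ofReal_one,
          ENNReal.ofReal_natCast]
      rw [e1, ← ENNReal.ofReal_mul (by positivity), ← ENNReal.ofReal_natCast k]
      exact ENNReal.ofReal_le_ofReal hkle
    exact (ENNReal.mul_le_mul_iff_right hne0 hnetop).1 hstep
  · simp only [if_neg hcase]
    have hset : {ω | ((s (Fin.last n) ω : ℝ) : EReal) ≤ (⊤ : EReal)} = Set.univ := by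
      ext ω
      simp [le_top]
    rw [hset, measure_univ]
    exact ENNReal.ofReal_le_one.2 (by linarith)
end

section
/- Let s₁, …, s_{n+1} be i.i.d. real-valued random variables whose common distribution has a continuous cumulative distribution function, and let s_{(k)} denote the k-th smallest value among s₁, …, s_n. Then for every k ∈ {1, …, n}, P(s_{n+1} ≤ s_{(k)}) = k/(n+1). -/
open MeasureTheory ProbabilityTheory ENNReal

open List in
/-- For a sorted list, `t ≤ l[i]` iff at most `i` elements of `l` are `< t`. -/
lemma sorted_le_getElem_iff {l : List ℝ} (hl : l.Pairwise (· ≤ ·)) (t : ℝ) (i : ℕ)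
    (hi : i < l.length) :
    t ≤ l[i] ↔ (l.filter (fun a => a < t)).length ≤ i := by
  constructor
  · intro h
    have hdec : (l.drop i).filter (fun a => a < t) = [] := by
      rw [List.filter_eq_nil_iff]
      intro a ha
      obtain ⟨j, hj, rfl⟩ := List.mem_iff_getElem.mp ha
      rw [List.getElem_drop]
      simp only [decide_eq_true_eq, not_lt]
      refine le_trans h ?_
      rcases Nat.eq_zero_or_pos j with rfl | hj0
      · simp
      · have := hl.rel_get_of_lt (a := ⟨i, hi⟩)
          (b := ⟨i + j, by have := (List.length_drop (i := i) (l := l)) ▸ hj; omega⟩)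
          (by simp [Fin.lt_def]; omega)
        simpa using this
    calc (l.filter (fun a => a < t)).length
        = ((l.take i ++ l.drop i).filter (fun a => a < t)).length := by
          rw [List.take_append_drop]
      _ = ((l.take i).filter (fun a => a < t)).length := by
          rw [List.filter_append, hdec, List.append_nil]
      _ ≤ (l.take i).length := List.length_filter_le _ _
      _ ≤ i := by simp
  · intro h
    by_contra hcon
    push_neg at hcon
    have hful : (l.take (i+1)).filter (fun a => a < t) = l.take (i+1) := by
      rw [List.filter_eq_self]
      intro a ha
      obtain ⟨j, hj, rfl⟩ := List.mem_iff_getElem.mp ha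
      rw [List.getElem_take]
      simp only [decide_eq_true_eq]
      have hjlen : j < l.length := lt_of_lt_of_le hj (by simp)
      have hji : j ≤ i := by simp [List.length_take] at hj; omega
      rcases eq_or_lt_of_le hji with rfl | hlt
      · exact hcon
      · have := hl.rel_get_of_lt (a := ⟨j, hjlen⟩) (b := ⟨i, hi⟩) (by simpa [Fin.lt_def])
        simp only [List.get_eq_getElem] at this
        exact lt_of_le_of_lt this hcon
    have hsub : (l.take (i+1)).filter (fun a => a < t) <+ l.filter (fun a => a < t) :=
      (List.take_sublist _ _).filter _
    have := hsub.length_le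
    rw [hful] at this
    simp [List.length_take, Nat.min_eq_left (by omega : i + 1 ≤ l.length)] at this
    omega

/-- The rank (number of strictly smaller entries) of coordinate `i`. -/
noncomputable def rnk {N : ℕ} (x : Fin N → ℝ) (i : Fin N) : ℕ :=
  (Finset.univ.filter (fun j => x j < x i)).card

lemma rnk_lt_of_lt {N : ℕ} (x : Fin N → ℝ) {i j : Fin N} (h : x i < x j) :
    rnk x i < rnk x j := by
  apply Finset.card_lt_card
  constructor
  · intro a ha
    simp only [Finset.mem_filter, Finset.mem_univ, true_and] at ha ⊢
    exact ha.trans h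
  · intro hsub
    have : i ∈ Finset.univ.filter (fun a => x a < x j) := by simp [h]
    have := hsub this
    simp at this

lemma rnk_injective {N : ℕ} (x : Fin N → ℝ) (hx : Function.Injective x) :
    Function.Injective (rnk x) := by
  intro i j hij
  by_contra hne
  rcases lt_or_gt_of_ne (fun h => hne (hx h)) with h | h
  · exact absurd hij (Nat.ne_of_lt (rnk_lt_of_lt x h))
  · exact absurd hij.symm (Nat.ne_of_lt (rnk_lt_of_lt x h))

lemma rnk_lt {N : ℕ} (x : Fin N → ℝ) (i : Fin N) (hN : 0 < N) : rnk x i < N := by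
  have : Finset.univ.filter (fun j => x j < x i) ⊆ Finset.univ.erase i := by
    intro a ha
    simp only [Finset.mem_filter, Finset.mem_univ, true_and] at ha
    exact Finset.mem_erase.mpr ⟨fun h => by simp [h] at ha, Finset.mem_univ a⟩
  calc rnk x i ≤ (Finset.univ.erase i).card := Finset.card_le_card this
    _ < N := by rw [Finset.card_erase_of_mem (Finset.mem_univ i)]; simp; omega

lemma image_rnk {N : ℕ} (x : Fin N → ℝ) (hx : Function.Injective x) :
    Finset.univ.image (rnk x) = Finset.range N := by
  rcases Nat.eq_zero_or_pos N with rfl | hN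
  · simp
  apply Finset.eq_of_subset_of_card_le
  · intro v hv
    simp only [Finset.mem_image, Finset.mem_univ, true_and] at hv
    obtain ⟨i, rfl⟩ := hv
    exact Finset.mem_range.mpr (rnk_lt x i hN)
  · rw [Finset.card_range, Finset.card_image_of_injective _ (rnk_injective x hx)]
    simp

lemma card_rnk_lt {N k : ℕ} (x : Fin N → ℝ) (hx : Function.Injective x) (hk : k ≤ N) :
    (Finset.univ.filter (fun i => rnk x i < k)).card = k := by
  have h1 : ((Finset.univ.filter (fun i => rnk x i < k)).image (rnk x)).card
      = (Finset.univ.filter (fun i => rnk x i < k)).card :=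
    Finset.card_image_of_injective _ (rnk_injective x hx)
  have h2 := Finset.filter_image (f := rnk x) (s := Finset.univ) (p := fun v => v < k)
  rw [← h1, ← h2, image_rnk x hx]
  have : (Finset.range N).filter (fun v => v < k) = Finset.range k := by
    ext v; simp only [Finset.mem_filter, Finset.mem_range]; omega
  rw [this, Finset.card_range]

lemma le_kthSmallest_iff_s2 {N k : ℕ} (hk1 : 1 ≤ k) (hkN : k ≤ N) (x : Fin (N+1) → ℝ) :
    x (Fin.last N) ≤ kthSmallest (Finset.univ.val.map (fun j : Fin N => x j.castSucc)) k ↔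
      rnk x (Fin.last N) < k := by
  set t := x (Fin.last N) with ht
  set m : Multiset ℝ := Finset.univ.val.map (fun j : Fin N => x j.castSucc) with hm
  set l := m.sort (· ≤ ·) with hl
  have hlen : l.length = N := by
    simp [hl, Multiset.length_sort, hm]
  have hiN : k - 1 < l.length := by omega
  have hsorted : l.Pairwise (· ≤ ·) := Multiset.pairwise_sort (s := m) (r := (· ≤ ·))
  have h1 : kthSmallest m k = l[k-1] := List.getD_eq_getElem l 0 hiN
  have h2 := sorted_le_getElem_iff hsorted t (k-1) hiN
  have h3 : (l.filter (fun a => a < t)).length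
      = (Finset.univ.filter (fun j : Fin N => x j.castSucc < t)).card := by
    have hcoe : ((l.filter (fun a => a < t) : List ℝ) : Multiset ℝ)
        = Multiset.filter (fun a => a < t) m := by
      conv_rhs => rw [← Multiset.sort_eq (r := fun a b : ℝ => a ≤ b) (s := m), Multiset.filter_coe]
    have : (l.filter (fun a => a < t)).length
        = Multiset.card (Multiset.filter (fun a => a < t) m) := by
      rw [← hcoe]; simp
    rw [this, hm, Multiset.filter_map, Multiset.card_map, ← Finset.filter_val,
      ← Finset.card_def]
    rfl
  have h4 : rnk x (Fin.last N)
      = (Finset.univ.filter (fun j : Fin N => x j.castSucc < t)).card := by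
    rw [rnk, Finset.card_filter, Finset.card_filter, Fin.sum_univ_castSucc]
    simp [← ht]
  rw [kthSmallest] at *
  rw [← hl, h1, h2, h3, h4]
  omega

lemma measurableSet_rnk_lt {N : ℕ} (i : Fin N) (k : ℕ) :
    MeasurableSet {x : Fin N → ℝ | rnk x i < k} := by
  have hm : Measurable (fun x : Fin N → ℝ => rnk x i) := by
    simp only [rnk, Finset.card_filter]
    exact Finset.measurable_sum _ (fun j _ => Measurable.ite
      (measurableSet_lt (measurable_pi_apply j) (measurable_pi_apply i)) measurable_const
      measurable_const)
  exact hm (measurableSet_Iio (a := k))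

/-- If `s 0, …, s n` are i.i.d. with a common atomless distribution (continuous CDF), and
`s_{(k)}` denotes the `k`-th smallest among the first `n` variables, then for every
`k ∈ {1,…,n}`, `P(s_{n+1} ≤ s_{(k)}) = k / (n+1)`. -/
theorem prob_le_order_statistic
    {Ω : Type*} [MeasurableSpace Ω] (μ : Measure Ω) [IsProbabilityMeasure μ]
    (n : ℕ) (hn : 1 ≤ n)
    (s : Fin (n + 1) → Ω → ℝ) (hs : ∀ i, Measurable (s i))
    (ν : Measure ℝ) [IsProbabilityMeasure ν]
    (hindep : iIndepFun s μ)
    (hident : ∀ i, Measure.map (s i) μ = ν)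
    (hcont : ∀ x : ℝ, ν {x} = 0) :
    ∀ k : ℕ, 1 ≤ k → k ≤ n →
      μ {ω | s (Fin.last n) ω
          ≤ kthSmallest (Finset.univ.val.map (fun j : Fin n => s (Fin.castSucc j) ω)) k}
        = (k : ℝ≥0∞) / ((n : ℝ≥0∞) + 1) := by
  intro k hk1 hkn
  set X : Ω → (Fin (n+1) → ℝ) := fun ω i => s i ω with hXdef
  have hX : Measurable X := measurable_pi_iff.mpr hs
  set P : Measure (Fin (n+1) → ℝ) := Measure.pi (fun _ => ν) with hPdef
  have hmap : Measure.map X μ = P := by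
    refine (Measure.pi_eq fun S hS => ?_).symm
    rw [Measure.map_apply hX (MeasurableSet.univ_pi hS)]
    have hpre : X ⁻¹' Set.pi Set.univ S
        = ⋂ i ∈ (Finset.univ : Finset (Fin (n+1))), s i ⁻¹' S i := by
      ext ω; simp [X, Set.mem_pi]
    rw [hpre, hindep.measure_inter_preimage_eq_mul Finset.univ (fun i _ => hS i)]
    refine Finset.prod_congr rfl fun i _ => ?_
    rw [← hident i, Measure.map_apply (hs i) (hS i)]
  have hPA : ∀ A : Set (Fin (n+1) → ℝ), MeasurableSet A → μ (X ⁻¹' A) = P A := fun A hA => by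
    rw [← hmap, Measure.map_apply hX hA]
  haveI : IsProbabilityMeasure P := by
    rw [← hmap]; exact Measure.isProbabilityMeasure_map hX.aemeasurable
  set C : Fin (n+1) → Set (Fin (n+1) → ℝ) := fun i => {x | rnk x i < k} with hCdef
  have hC : ∀ i, MeasurableSet (C i) := fun i => measurableSet_rnk_lt i k
  -- the event is the preimage of C (last)
  have hev : {ω | s (Fin.last n) ω
        ≤ kthSmallest (Finset.univ.val.map (fun j : Fin n => s (Fin.castSucc j) ω)) k}
      = X ⁻¹' (C (Fin.last n)) := by
    ext ω
    simp only [Set.mem_setOf_eq, Set.mem_preimage, hCdef]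
    exact le_kthSmallest_iff_s2 hk1 hkn (fun i => s i ω)
  -- ties are null
  have hpair : ∀ i j : Fin (n+1), i ≠ j → P {x | x i = x j} = 0 := by
    intro i j hij
    have hmeas : MeasurableSet {x : Fin (n+1) → ℝ | x i = x j} :=
      measurableSet_eq_fun (measurable_pi_apply i) (measurable_pi_apply j)
    rw [← hPA _ hmeas]
    have hind : IndepFun (s i) (s j) μ := hindep.indepFun hij
    have hjoint : μ.map (fun ω => (s i ω, s j ω)) = ν.prod ν := by
      rw [(indepFun_iff_map_prod_eq_prod_map_map (hs i).aemeasurable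
        (hs j).aemeasurable).mp hind, hident i, hident j]
    have hdiag : MeasurableSet {p : ℝ × ℝ | p.1 = p.2} :=
      measurableSet_eq_fun measurable_fst measurable_snd
    have hXpre : X ⁻¹' {x | x i = x j}
        = (fun ω => (s i ω, s j ω)) ⁻¹' {p | p.1 = p.2} := rfl
    rw [hXpre, ← Measure.map_apply ((hs i).prodMk (hs j)) hdiag, hjoint,
      Measure.prod_apply hdiag]
    have hfib : ∀ a : ℝ, ν (Prod.mk a ⁻¹' {p : ℝ × ℝ | p.1 = p.2}) = 0 := by
      intro a
      have : Prod.mk a ⁻¹' {p : ℝ × ℝ | p.1 = p.2} = {a} := by ext b; simp [eq_comm]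
      rw [this]; exact hcont a
    simp [hfib, hcont]
  have hinj : ∀ᵐ x ∂P, Function.Injective x := by
    rw [ae_iff]
    refine measure_mono_null ?_ (measure_iUnion_null fun i => measure_iUnion_null fun j =>
      measure_iUnion_null fun hij => hpair i j hij)
    intro x hx
    simp only [Set.mem_setOf_eq, Function.Injective, not_forall] at hx
    obtain ⟨i, j, hij, hne⟩ := hx
    exact Set.mem_iUnion.mpr ⟨i, Set.mem_iUnion.mpr ⟨j, Set.mem_iUnion.mpr ⟨hne, hij⟩⟩⟩
  -- symmetry: all C i have the same probability
  have hsymm : ∀ i : Fin (n+1), P (C i) = P (C (Fin.last n)) := by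
    intro i
    set σ : Equiv.Perm (Fin (n+1)) := Equiv.swap i (Fin.last n) with hσ
    have hmp := measurePreserving_piCongrLeft (fun _ : Fin (n+1) => ν) σ
    set T := MeasurableEquiv.piCongrLeft (fun _ : Fin (n+1) => ℝ) σ with hT
    have happ : ∀ (x : Fin (n+1) → ℝ) (b : Fin (n+1)), T x b = x (σ.symm b) := by
      intro x b
      conv_lhs => rw [show b = σ (σ.symm b) by simp]
      exact MeasurableEquiv.piCongrLeft_apply_apply (β := fun _ : Fin (n+1) => ℝ) σ x (σ.symm b)
    have hcard : ∀ (q : Fin (n+1) → Prop) (_ : DecidablePred q),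
        (Finset.univ.filter (fun j => q (σ.symm j))).card = (Finset.univ.filter q).card := by
      intro q _
      have h1 := Finset.card_image_of_injective
        (Finset.univ.filter (fun j => q (σ.symm j))) σ.symm.injective
      have h2 := Finset.filter_image (f := σ.symm) (s := Finset.univ) (p := q)
      rw [← h1, ← h2, Finset.image_univ_equiv]
    have hpre : T ⁻¹' (C (Fin.last n)) = C i := by
      ext x
      simp only [Set.mem_preimage, hCdef, Set.mem_setOf_eq]
      have : rnk (T x) (Fin.last n) = rnk x i := by
        simp only [rnk]
        have hb : ∀ j, (T x j < T x (Fin.last n)) ↔ (x (σ.symm j) < x i) := by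
          intro j
          rw [happ, happ]
          have : σ.symm (Fin.last n) = i := by
            rw [hσ, Equiv.symm_swap, Equiv.swap_apply_right]
          rw [this]
        calc (Finset.univ.filter (fun j => T x j < T x (Fin.last n))).card
            = (Finset.univ.filter (fun j => x (σ.symm j) < x i)).card := by
              congr 1; ext j; simp [hb j]
          _ = (Finset.univ.filter (fun j => x j < x i)).card :=
              hcard (fun j => x j < x i) _
      rw [this]
    calc P (C i) = P (T ⁻¹' (C (Fin.last n))) := by rw [hpre]
      _ = P (C (Fin.last n)) := hmp.measure_preimage (hC _).nullMeasurableSet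
  -- sum of probabilities is k
  have hsum : ∑ i : Fin (n+1), P (C i) = (k : ℝ≥0∞) := by
    have h1 : ∀ i : Fin (n+1), P (C i)
        = ∫⁻ x, Set.indicator (C i) (fun _ => (1:ℝ≥0∞)) x ∂P := fun i =>
      (lintegral_indicator_one (hC i)).symm
    simp_rw [h1]
    have hae : (fun x => ∑ i : Fin (n+1), Set.indicator (C i) (fun _ => (1:ℝ≥0∞)) x)
        =ᵐ[P] (fun _ => (k : ℝ≥0∞)) := by
      filter_upwards [hinj] with x hx
      simp only [Set.indicator_apply, hCdef, Set.mem_setOf_eq]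
      rw [Finset.sum_boole]
      norm_cast
      exact card_rnk_lt x hx (by omega)
    calc ∑ i : Fin (n+1), ∫⁻ x, Set.indicator (C i) (fun _ => (1:ℝ≥0∞)) x ∂P
        = ∫⁻ x, ∑ i : Fin (n+1), Set.indicator (C i) (fun _ => (1:ℝ≥0∞)) x ∂P :=
          (lintegral_finset_sum _ (fun i _ => (measurable_one.indicator (hC i)))).symm
      _ = ∫⁻ _, (k : ℝ≥0∞) ∂P := lintegral_congr_ae hae
      _ = (k : ℝ≥0∞) := by rw [lintegral_const, measure_univ, mul_one]
  have hconst : ∑ i : Fin (n+1), P (C i) = ((n : ℝ≥0∞) + 1) * P (C (Fin.last n)) := by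
    rw [Finset.sum_congr rfl (fun i _ => hsymm i), Finset.sum_const, Finset.card_univ,
      Fintype.card_fin, nsmul_eq_mul]
    push_cast
    ring
  have hfinal : ((n : ℝ≥0∞) + 1) * P (C (Fin.last n)) = (k : ℝ≥0∞) := by
    rw [← hconst, hsum]
  rw [hev, hPA _ (hC _)]
  rw [ENNReal.eq_div_iff (by simp) (by simp)]
  exact hfinal
end

section
/- Let α ∈ (0,1), let (X₁,Y₁), …, (X_{n+1},Y_{n+1}) be exchangeable random pairs taking values in ℝ^D × ℝ (e.g., i.i.d.), and let f : ℝ^D → ℝ be a fixed measurable function (a regression model trained on independent data). Define the scores s_i = |Y_i − f(X_i)| for i = 1, …, n+1 and let q̂ be the ⌈(n+1)(1−α)⌉-th smallest value among s₁, …, s_n (with q̂ = +∞ if ⌈(n+1)(1−α)⌉ > n). Then P( f(X_{n+1}) − q̂ ≤ Y_{n+1} ≤ f(X_{n+1}) + q̂ ) ≥ 1 − α. -/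
open MeasureTheory
open scoped ENNReal NNReal

lemma list_key {L : List ℝ} (hL : L.Pairwise (· ≤ ·)) {k : ℕ} (h1 : 1 ≤ k)
    (hk : k ≤ L.length) (x : ℝ) :
    x ≤ L.getD (k-1) 0 ↔ (L.filter (fun y => y < x)).length < k := by
  have hklen : k - 1 < L.length := lt_of_lt_of_le (Nat.sub_lt h1 one_pos) hk
  rw [List.getD_eq_getElem L 0 hklen]
  constructor
  · intro hx
    have hsplit : L = L.take (k-1) ++ L.drop (k-1) := (List.take_append_drop _ _).symm
    have hdrop : (L.drop (k-1)).countP (fun y => decide (y < x)) = 0 := by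
      rw [List.countP_eq_zero]
      intro y hy
      obtain ⟨i, hi, rfl⟩ := List.mem_iff_getElem.mp hy
      have hi' : i < L.length - (k-1) := by simpa using hi
      rw [List.getElem_drop]
      have : L[k-1] ≤ L[k-1+i] := by
        have := hL.rel_get_of_le (a := ⟨k-1, hklen⟩)
          (b := ⟨k-1+i, by omega⟩) (Fin.mk_le_mk.mpr (by omega))
        simpa using this
      simpa using not_lt.mpr (le_trans hx this)
    calc (L.filter (fun y => y < x)).length = L.countP (fun y => decide (y < x)) := by
          rw [List.countP_eq_length_filter]
      _ = (L.take (k-1)).countP _ + (L.drop (k-1)).countP _ := by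
          conv_lhs => rw [hsplit]
          rw [List.countP_append]
      _ ≤ (L.take (k-1)).length + 0 := by
          rw [hdrop]; exact Nat.add_le_add (List.countP_le_length) le_rfl
      _ ≤ (k-1) + 0 := by simp [List.length_take]
      _ < k := by omega
  · intro hcount
    by_contra hx
    push_neg at hx
    have htake : ((L.take k).filter (fun y => y < x)).length = k := by
      rw [List.filter_eq_self.mpr, List.length_take, min_eq_left hk]
      intro y hy
      obtain ⟨i, hi, rfl⟩ := List.mem_iff_getElem.mp hy
      have hik : i < k := by
        rw [List.length_take] at hi; omega
      rw [List.getElem_take]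
      have : L[i] ≤ L[k-1] := by
        have := hL.rel_get_of_le (a := ⟨i, by omega⟩) (b := ⟨k-1, hklen⟩)
          (Fin.mk_le_mk.mpr (by omega))
        simpa using this
      simp only [decide_eq_true_eq]
      linarith
    have hsub : ((L.take k).filter (fun y => y < x)).length ≤ (L.filter (fun y => y < x)).length :=
      ((List.take_sublist k L).filter _).length_le
    omega

lemma sort_coe_of_sorted {L : List ℝ} (hL : L.Pairwise (· ≤ ·)) :
    (L : Multiset ℝ).sort (· ≤ ·) = L :=
  List.Perm.eq_of_pairwise' (Multiset.pairwise_sort _ _) hL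
    (Multiset.coe_eq_coe.mp (Multiset.sort_eq _ _))

lemma multiset_key (m : Multiset ℝ) {k : ℕ} (h1 : 1 ≤ k) (hk : k ≤ Multiset.card m) (x : ℝ) :
    x ≤ kthSmallest m k ↔ Multiset.card (m.filter (fun y => y < x)) < k := by
  obtain ⟨L, hLs, rfl⟩ : ∃ L : List ℝ, L.Pairwise (· ≤ ·) ∧ (L : Multiset ℝ) = m :=
    ⟨m.sort (· ≤ ·), Multiset.pairwise_sort _ _, Multiset.sort_eq _ _⟩
  rw [kthSmallest, sort_coe_of_sorted hLs]
  rw [list_key hLs h1 (by simpa using hk) x]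
  simp [Multiset.filter_coe]

lemma card_le_filter_kth (m : Multiset ℝ) {k : ℕ} (h1 : 1 ≤ k) (hk : k ≤ Multiset.card m) :
    k ≤ Multiset.card (m.filter (fun y => y ≤ kthSmallest m k)) := by
  obtain ⟨L, hLs, rfl⟩ : ∃ L : List ℝ, L.Pairwise (· ≤ ·) ∧ (L : Multiset ℝ) = m :=
    ⟨m.sort (· ≤ ·), Multiset.pairwise_sort _ _, Multiset.sort_eq _ _⟩
  have hk' : k ≤ L.length := by simpa using hk
  have hklen : k - 1 < L.length := by omega
  have hkth : kthSmallest (↑L) k = L[k-1] := by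
    rw [kthSmallest, sort_coe_of_sorted hLs]; exact List.getD_eq_getElem L 0 hklen
  have hcard : Multiset.card ((L : Multiset ℝ).filter (fun y => y ≤ kthSmallest (↑L) k))
      = (L.filter (fun y => y ≤ kthSmallest (↑L) k)).length := by simp [Multiset.filter_coe]
  rw [hcard]
  have htake : ((L.take k).filter (fun y => y ≤ kthSmallest (↑L) k)).length = k := by
    rw [List.filter_eq_self.mpr, List.length_take, min_eq_left hk']
    intro y hy
    obtain ⟨i, hi, rfl⟩ := List.mem_iff_getElem.mp hy
    have hik : i < k := by rw [List.length_take] at hi; omega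
    rw [List.getElem_take]
    have : L[i] ≤ L[k-1] := by
      have := hLs.rel_get_of_le (a := ⟨i, by omega⟩) (b := ⟨k-1, hklen⟩)
        (Fin.mk_le_mk.mpr (by omega))
      simpa using this
    simp only [decide_eq_true_eq, hkth]
    linarith
  have hsub := ((List.take_sublist k L).filter (fun y => decide (y ≤ kthSmallest (↑L) k))).length_le
  omega

open Finset in
lemma filter_perm_card {N : ℕ} (σ : Equiv.Perm (Fin N)) (p : Fin N → Prop) [DecidablePred p] :
    (Finset.univ.filter (fun i => p (σ i))).card = (Finset.univ.filter p).card := by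
  apply Finset.card_bij (fun i _ => σ i)
  · intro a ha; simp only [Finset.mem_filter, Finset.mem_univ, true_and] at ha ⊢; exact ha
  · intro a _ b _ h; exact σ.injective h
  · intro b hb
    refine ⟨σ.symm b, ?_, by simp⟩
    simp only [Finset.mem_filter, Finset.mem_univ, true_and] at hb ⊢
    simpa using hb

lemma multiset_filter_card {N : ℕ} (t : Fin N → ℝ) (p : ℝ → Prop) [DecidablePred p] :
    Multiset.card ((Finset.univ.val.map t).filter p)
      = (Finset.univ.filter (fun i => p (t i))).card := by
  rw [Multiset.filter_map, Multiset.card_map]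
  rfl

lemma rank_lemma {N k : ℕ} (t : Fin N → ℝ) (h1 : 1 ≤ k) (hk : k ≤ N) :
    k ≤ (Finset.univ.filter
      (fun j => (Finset.univ.filter (fun i => t i < t j)).card < k)).card := by
  set m : Multiset ℝ := Finset.univ.val.map t with hm
  have hcm : Multiset.card m = N := by simp [hm]
  set q : ℝ := kthSmallest m k with hq
  have h2 : k ≤ (Finset.univ.filter (fun j => t j ≤ q)).card := by
    have := card_le_filter_kth m h1 (by omega)
    rwa [multiset_filter_card t (fun y => y ≤ q)] at this
  refine le_trans h2 (Finset.card_le_card ?_)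
  intro j hj
  simp only [Finset.mem_filter, Finset.mem_univ, true_and] at hj ⊢
  have := (multiset_key m h1 (by omega) (t j)).mp hj
  rwa [multiset_filter_card t (fun y => y < t j)] at this

/-- Marginal coverage of the naive split conformal method: for exchangeable pairs
`(X i, Y i)` in `ℝ^D × ℝ` and a fixed measurable regression function `f`, with scores
`s i = |Y i - f (X i)|` and `q̂` the `⌈(n+1)(1-α)⌉`-th smallest calibration score
(`+∞` if `⌈(n+1)(1-α)⌉ > n`), we have
`P(f(X_{n+1}) - q̂ ≤ Y_{n+1} ≤ f(X_{n+1}) + q̂) ≥ 1 - α`. -/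
theorem naive_conformal_coverage
    {Ω : Type*} [MeasurableSpace Ω] (μ : Measure Ω) [IsProbabilityMeasure μ]
    (D n : ℕ) (α : ℝ) (hα : α ∈ Set.Ioo (0 : ℝ) 1)
    (X : Fin (n + 1) → Ω → (Fin D → ℝ)) (Y : Fin (n + 1) → Ω → ℝ)
    (hXY : ∀ i, Measurable (fun ω => (X i ω, Y i ω)))
    (hexch : ∀ σ : Equiv.Perm (Fin (n + 1)),
      Measure.map (fun ω => fun i => (X (σ i) ω, Y (σ i) ω)) μ
        = Measure.map (fun ω => fun i => (X i ω, Y i ω)) μ)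
    (f : (Fin D → ℝ) → ℝ) (hf : Measurable f) :
    μ {ω |
        ((f (X (Fin.last n) ω) : ℝ) : EReal) -
            (if ⌈((n : ℝ) + 1) * (1 - α)⌉₊ ≤ n
              then ((kthSmallest
                  (Finset.univ.val.map
                    (fun i : Fin n => |Y (Fin.castSucc i) ω - f (X (Fin.castSucc i) ω)|))
                  ⌈((n : ℝ) + 1) * (1 - α)⌉₊ : ℝ) : EReal)
              else (⊤ : EReal))
          ≤ ((Y (Fin.last n) ω : ℝ) : EReal)
        ∧ ((Y (Fin.last n) ω : ℝ) : EReal)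
          ≤ ((f (X (Fin.last n) ω) : ℝ) : EReal) +
            (if ⌈((n : ℝ) + 1) * (1 - α)⌉₊ ≤ n
              then ((kthSmallest
                  (Finset.univ.val.map
                    (fun i : Fin n => |Y (Fin.castSucc i) ω - f (X (Fin.castSucc i) ω)|))
                  ⌈((n : ℝ) + 1) * (1 - α)⌉₊ : ℝ) : EReal)
              else (⊤ : EReal))}
      ≥ ENNReal.ofReal (1 - α) := by
  classical
  obtain ⟨hα0, hα1⟩ := hα
  set k : ℕ := ⌈((n : ℝ) + 1) * (1 - α)⌉₊ with hkdef
  have hk1 : 1 ≤ k := by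
    rw [hkdef]
    rw [Nat.one_le_iff_ne_zero, ← Nat.pos_iff_ne_zero, Nat.ceil_pos]
    nlinarith
  by_cases hkn : k ≤ n
  · -- main case
    -- scores
    set s : Fin (n + 1) → Ω → ℝ := fun i ω => |Y i ω - f (X i ω)| with hsdef
    have hs : ∀ i, Measurable (s i) := fun i =>
      ((measurable_snd.comp (hXY i)).sub (hf.comp (measurable_fst.comp (hXY i)))).abs
    set G : (Fin (n + 1) → (Fin D → ℝ) × ℝ) → Fin (n + 1) → ℝ :=
      fun v i => |(v i).2 - f (v i).1| with hGdef
    have hG : ∀ i, Measurable (fun v => G v i) := fun i =>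
      ((measurable_snd.comp (measurable_pi_apply i)).sub
        (hf.comp (measurable_fst.comp (measurable_pi_apply i)))).abs
    set B : Fin (n + 1) → Set (Fin (n + 1) → (Fin D → ℝ) × ℝ) :=
      fun j => {v | (Finset.univ.filter (fun i => G v i < G v j)).card < k} with hBdef
    have hB : ∀ j, MeasurableSet (B j) := by
      intro j
      have hcard : Measurable (fun v => (Finset.univ.filter (fun i => G v i < G v j)).card) := by
        simp only [Finset.card_filter]
        exact Finset.measurable_sum _ (fun i _ =>
          Measurable.ite (measurableSet_lt (hG i) (hG j)) measurable_const measurable_const)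
      exact hcard ((Set.to_countable (Set.Iio k)).measurableSet)
    set Z : Ω → (Fin (n + 1) → (Fin D → ℝ) × ℝ) := fun ω i => (X i ω, Y i ω) with hZdef
    have hZ : Measurable Z := measurable_pi_lambda _ hXY
    set A : Fin (n + 1) → Set Ω := fun j => Z ⁻¹' (B j) with hAdef
    have hA : ∀ j, MeasurableSet (A j) := fun j => hZ (hB j)
    have hAmem : ∀ j ω, ω ∈ A j ↔
        (Finset.univ.filter (fun i => s i ω < s j ω)).card < k := fun j ω => Iff.rfl
    -- all A j have the same measure
    have hAeq : ∀ j, μ (A j) = μ (A (Fin.last n)) := by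
      intro j
      set σ : Equiv.Perm (Fin (n + 1)) := Equiv.swap j (Fin.last n) with hσ
      have hWmeas : Measurable (fun ω => fun i => (X (σ i) ω, Y (σ i) ω)) :=
        measurable_pi_lambda _ (fun i => hXY (σ i))
      have hpre : A j = (fun ω => fun i => (X (σ i) ω, Y (σ i) ω)) ⁻¹' (B (Fin.last n)) := by
        ext ω
        simp only [Set.mem_preimage, hAdef, hBdef, Set.mem_setOf_eq]
        have hGs : ∀ i, G (fun i => (X (σ i) ω, Y (σ i) ω)) i = s (σ i) ω := fun i => rfl
        have hlast : σ (Fin.last n) = j := Equiv.swap_apply_right _ _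
        constructor
        · intro h
          simp only [hGs, hlast]
          rwa [filter_perm_card σ (fun i => s i ω < s j ω)]
        · intro h
          simp only [hGs, hlast] at h
          rwa [filter_perm_card σ (fun i => s i ω < s j ω)] at h
      rw [hpre, ← Measure.map_apply hWmeas (hB (Fin.last n)), hexch σ,
        Measure.map_apply hZ (hB (Fin.last n))]
    -- pointwise counting bound
    have hcount : ∀ ω, (k : ℝ≥0∞) ≤ ∑ j, (A j).indicator (fun _ => (1 : ℝ≥0∞)) ω := by
      intro ω
      have hr := rank_lemma (fun j => s j ω) hk1 (by omega)
      have : ∑ j, (A j).indicator (fun _ => (1 : ℝ≥0∞)) ω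
          = ((Finset.univ.filter (fun j => ω ∈ A j)).card : ℝ≥0∞) := by
        rw [Finset.card_filter, Nat.cast_sum]
        refine Finset.sum_congr rfl (fun j _ => ?_)
        by_cases h : ω ∈ A j <;> simp [Set.indicator_apply, h]
      rw [this]
      have hsets : (Finset.univ.filter
            (fun j => (Finset.univ.filter (fun i => s i ω < s j ω)).card < k))
          = Finset.univ.filter (fun j => ω ∈ A j) := by
        apply Finset.filter_congr
        intro j _
        simp [hAmem j ω]
      exact_mod_cast hsets ▸ hr
    -- integrate
    have hsum : ∑ j, μ (A j) = ∫⁻ ω, ∑ j, (A j).indicator (fun _ => (1 : ℝ≥0∞)) ω ∂μ := by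
      rw [lintegral_finset_sum _ (fun j _ => (measurable_const.indicator (hA j)))]
      refine Finset.sum_congr rfl (fun j _ => ?_)
      rw [lintegral_indicator_const (hA j), one_mul]
    have hkey : (k : ℝ≥0∞) ≤ ((n : ℝ≥0∞) + 1) * μ (A (Fin.last n)) := by
      have h1 : (k : ℝ≥0∞) = ∫⁻ _, (k : ℝ≥0∞) ∂μ := by simp
      have h2 : ∫⁻ _, (k : ℝ≥0∞) ∂μ ≤ ∫⁻ ω, ∑ j, (A j).indicator (fun _ => (1 : ℝ≥0∞)) ω ∂μ :=
        lintegral_mono (fun ω => hcount ω)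
      rw [h1]
      refine le_trans h2 ?_
      rw [← hsum]
      have : ∑ j, μ (A j) = ((n : ℝ≥0∞) + 1) * μ (A (Fin.last n)) := by
        rw [Finset.sum_congr rfl (fun j _ => hAeq j), Finset.sum_const, Finset.card_univ]
        simp [nsmul_eq_mul]
      rw [this]
    -- identify the event with A last
    have hEset : {ω |
        ((f (X (Fin.last n) ω) : ℝ) : EReal) -
            (if k ≤ n
              then ((kthSmallest
                  (Finset.univ.val.map
                    (fun i : Fin n => |Y (Fin.castSucc i) ω - f (X (Fin.castSucc i) ω)|))
                  k : ℝ) : EReal)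
              else (⊤ : EReal))
          ≤ ((Y (Fin.last n) ω : ℝ) : EReal)
        ∧ ((Y (Fin.last n) ω : ℝ) : EReal)
          ≤ ((f (X (Fin.last n) ω) : ℝ) : EReal) +
            (if k ≤ n
              then ((kthSmallest
                  (Finset.univ.val.map
                    (fun i : Fin n => |Y (Fin.castSucc i) ω - f (X (Fin.castSucc i) ω)|))
                  k : ℝ) : EReal)
              else (⊤ : EReal))} = A (Fin.last n) := by
      ext ω
      simp only [Set.mem_setOf_eq, if_pos hkn]
      set q : ℝ := kthSmallest
        (Finset.univ.val.map
          (fun i : Fin n => |Y (Fin.castSucc i) ω - f (X (Fin.castSucc i) ω)|)) k with hqdef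
      have hstep1 : (((f (X (Fin.last n) ω) : ℝ) : EReal) - (q : EReal)
            ≤ ((Y (Fin.last n) ω : ℝ) : EReal)
          ∧ ((Y (Fin.last n) ω : ℝ) : EReal)
            ≤ ((f (X (Fin.last n) ω) : ℝ) : EReal) + (q : EReal))
          ↔ s (Fin.last n) ω ≤ q := by
        rw [← EReal.coe_sub, ← EReal.coe_add, EReal.coe_le_coe_iff, EReal.coe_le_coe_iff]
        rw [hsdef]
        simp only []
        rw [abs_le]
        constructor <;> (intro h; constructor <;> linarith [h.1, h.2])
      rw [hstep1, hAmem]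
      have hcal : s (Fin.last n) ω ≤ q ↔
          Multiset.card ((Finset.univ.val.map
              (fun i : Fin n => |Y (Fin.castSucc i) ω - f (X (Fin.castSucc i) ω)|)).filter
            (fun y => y < s (Fin.last n) ω)) < k := by
        apply multiset_key _ hk1
        simp [hkn]
      rw [hcal, multiset_filter_card]
      have hext : (Finset.univ.filter
            (fun i : Fin n => |Y (Fin.castSucc i) ω - f (X (Fin.castSucc i) ω)|
              < s (Fin.last n) ω)).card
          = (Finset.univ.filter (fun i : Fin (n+1) => s i ω < s (Fin.last n) ω)).card := by
        rw [Finset.card_filter, Finset.card_filter, Fin.sum_univ_castSucc]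
        simp [hsdef]
      rw [hext]
    rw [ge_iff_le, hEset]
    -- final arithmetic
    have hceil : ((n : ℝ) + 1) * (1 - α) ≤ (k : ℝ) := Nat.le_ceil _
    have hmul : ENNReal.ofReal (1 - α) * ((n : ℝ≥0∞) + 1) ≤ (k : ℝ≥0∞) := by
      have : ((n : ℝ≥0∞) + 1) = ENNReal.ofReal ((n : ℝ) + 1) := by
        rw [ENNReal.ofReal_add (by positivity) (by norm_num)]
        simp [ENNReal.ofReal_natCast]
      rw [this, ← ENNReal.ofReal_mul (by linarith)]
      calc ENNReal.ofReal ((1 - α) * ((n : ℝ) + 1)) ≤ ENNReal.ofReal (k : ℝ) :=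
            ENNReal.ofReal_le_ofReal (by nlinarith)
        _ = (k : ℝ≥0∞) := ENNReal.ofReal_natCast k
    have hfin : ((n : ℝ≥0∞) + 1) ≠ ⊤ := by simp
    have hne : ((n : ℝ≥0∞) + 1) ≠ 0 := by simp
    have := le_trans hmul hkey
    rw [mul_comm ((n : ℝ≥0∞) + 1) _] at this
    exact (ENNReal.mul_le_mul_iff_left hne hfin).mp this
  · -- trivial case: interval is all of ℝ
    have hset : {ω |
        ((f (X (Fin.last n) ω) : ℝ) : EReal) -
            (if k ≤ n
              then ((kthSmallest
                  (Finset.univ.val.map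
                    (fun i : Fin n => |Y (Fin.castSucc i) ω - f (X (Fin.castSucc i) ω)|))
                  k : ℝ) : EReal)
              else (⊤ : EReal))
          ≤ ((Y (Fin.last n) ω : ℝ) : EReal)
        ∧ ((Y (Fin.last n) ω : ℝ) : EReal)
          ≤ ((f (X (Fin.last n) ω) : ℝ) : EReal) +
            (if k ≤ n
              then ((kthSmallest
                  (Finset.univ.val.map
                    (fun i : Fin n => |Y (Fin.castSucc i) ω - f (X (Fin.castSucc i) ω)|))
                  k : ℝ) : EReal)
              else (⊤ : EReal))} = Set.univ := by
      ext ω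
      simp only [Set.mem_setOf_eq, Set.mem_univ, iff_true, if_neg hkn]
      constructor
      · rw [EReal.sub_top]
        exact bot_le
      · rw [EReal.add_top_of_ne_bot (by simp)]
        exact le_top
    rw [ge_iff_le, hset, measure_univ]
    exact ENNReal.ofReal_le_one.mpr (by linarith)
end

section
/- Let α ∈ (0,1), let (X₁,Y₁), …, (X_{n+1},Y_{n+1}) be exchangeable random pairs taking values in ℝ^D × ℝ (e.g., i.i.d.), and let Q̂_lo, Q̂_hi : ℝ^D → ℝ be fixed measurable functions (estimated lower and upper conditional quantile functions trained on independent data). Define the scores s_i = max( Q̂_lo(X_i) − Y_i , Y_i − Q̂_hi(X_i) ) for i = 1, …, n+1, and let q̂ be the ⌈(n+1)(1−α)⌉-th smallest value among s₁, …, s_n (with q̂ = +∞ if ⌈(n+1)(1−α)⌉ > n). Then P( Q̂_lo(X_{n+1}) − q̂ ≤ Y_{n+1} ≤ Q̂_hi(X_{n+1}) + q̂ ) ≥ 1 − α. -/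
open MeasureTheory
open scoped ENNReal

lemma sorted_get_lt_iff {l : List ℝ} (hl : l.Pairwise (· ≤ ·)) {i : ℕ} (hi : i < l.length) (t : ℝ) :
    l.get ⟨i, hi⟩ < t ↔ i + 1 ≤ l.countP (fun x => decide (x < t)) := by
  induction l generalizing i with
  | nil => simp at hi
  | cons a l ih =>
    rw [List.pairwise_cons] at hl
    rw [List.countP_cons]
    cases i with
    | zero =>
      simp only [List.get]
      constructor
      · intro h
        have : decide (a < t) = true := by simpa using h
        simp [this]
      · intro h
        by_contra hat
        push_neg at hat
        have h0 : l.countP (fun x => decide (x < t)) = 0 := by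
          rw [List.countP_eq_zero]
          intro x hx
          simp only [decide_eq_true_eq]
          exact not_lt.2 (hat.trans (hl.1 x hx))
        simp [h0, show decide (a < t) = false by simpa using not_lt.2 hat] at h
    | succ j =>
      simp only [List.get]
      have hj : j < l.length := by simpa using hi
      rw [ih hl.2 hj]
      constructor
      · intro h
        have hpos : 0 < l.countP (fun x => decide (x < t)) := by omega
        obtain ⟨x, hx, hxt⟩ := List.countP_pos_iff.1 hpos
        have : decide (a < t) = true := by
          simp only [decide_eq_true_eq]
          exact lt_of_le_of_lt (hl.1 x hx) (by simpa using hxt)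
        simp [this]
        omega
      · intro h
        have : (if decide (a < t) = true then 1 else 0) ≤ 1 := by split <;> omega
        omega

lemma le_kthSmallest_iff_s4 {m : Multiset ℝ} {k : ℕ} (hk1 : 1 ≤ k) (hk : k ≤ Multiset.card m)
    (t : ℝ) : t ≤ kthSmallest m k ↔ (m.filter (· < t)).card ≤ k - 1 := by
  set l := m.sort (· ≤ ·) with hl
  have hsort : l.Pairwise (· ≤ ·) := m.pairwise_sort _
  have hlen : l.length = Multiset.card m := m.length_sort _
  have hik : k - 1 < l.length := by omega
  have hget : kthSmallest m k = l.get ⟨k - 1, hik⟩ := by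
    rw [kthSmallest, ← hl, List.getD_eq_getElem?_getD, List.getElem?_eq_getElem hik]; rfl
  have hcount : (m.filter (· < t)).card = l.countP (fun x => decide (x < t)) := by
    rw [← Multiset.countP_eq_card_filter]
    have : (l : Multiset ℝ) = m := m.sort_eq _
    rw [← this]
    rfl
  rw [hget, hcount, ← not_lt, sorted_get_lt_iff hsort hik t]
  omega

lemma rank_count_ge {N : ℕ} (s : Fin N → ℝ) (k : ℕ) (hk : k ≤ N) :
    k ≤ (Finset.univ.filter fun j =>
        (Finset.univ.filter fun i => s i < s j).card ≤ k - 1).card := by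
  by_contra hlt
  push_neg at hlt
  set T := Finset.univ.filter fun j : Fin N =>
      (Finset.univ.filter fun i => s i < s j).card ≤ k - 1 with hT
  have hne : (Tᶜ : Finset (Fin N)).Nonempty := by
    rw [← Finset.card_pos, Finset.card_compl]
    have : T.card < N := lt_of_lt_of_le hlt hk
    simpa using this
  obtain ⟨j', hj', hmin⟩ := Finset.exists_min_image (Tᶜ) s hne
  have hsub : (Finset.univ.filter fun i => s i < s j') ⊆ T := by
    intro i hi
    simp only [Finset.mem_filter, Finset.mem_univ, true_and] at hi
    by_contra hiT
    have : i ∈ Tᶜ := Finset.mem_compl.2 hiT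
    exact absurd (hmin i this) (not_le.2 hi)
  have : (Finset.univ.filter fun i => s i < s j').card ≤ k - 1 :=
    le_trans (Finset.card_le_card hsub) (by omega)
  have : j' ∈ T := by simp only [hT, Finset.mem_filter, Finset.mem_univ, true_and]; exact this
  exact (Finset.mem_compl.1 hj') this

/-- Marginal coverage of conformalized quantile regression (CQR): for exchangeable pairs
`(X i, Y i)` in `ℝ^D × ℝ` and fixed measurable quantile estimates `Qlo, Qhi`, with scores
`s i = max (Qlo (X i) - Y i) (Y i - Qhi (X i))` and `q̂` the `⌈(n+1)(1-α)⌉`-th smallest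
calibration score (`+∞` if `⌈(n+1)(1-α)⌉ > n`), we have
`P(Qlo(X_{n+1}) - q̂ ≤ Y_{n+1} ≤ Qhi(X_{n+1}) + q̂) ≥ 1 - α`. -/
theorem cqr_marginal_coverage
    {Ω : Type*} [MeasurableSpace Ω] (μ : Measure Ω) [IsProbabilityMeasure μ]
    (D n : ℕ) (α : ℝ) (hα : α ∈ Set.Ioo (0 : ℝ) 1)
    (X : Fin (n + 1) → Ω → (Fin D → ℝ)) (Y : Fin (n + 1) → Ω → ℝ)
    (hXY : ∀ i, Measurable (fun ω => (X i ω, Y i ω)))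
    (hexch : ∀ σ : Equiv.Perm (Fin (n + 1)),
      Measure.map (fun ω => fun i => (X (σ i) ω, Y (σ i) ω)) μ
        = Measure.map (fun ω => fun i => (X i ω, Y i ω)) μ)
    (Qlo Qhi : (Fin D → ℝ) → ℝ) (hQlo : Measurable Qlo) (hQhi : Measurable Qhi) :
    μ {ω |
        ((Qlo (X (Fin.last n) ω) : ℝ) : EReal) -
            (if ⌈((n : ℝ) + 1) * (1 - α)⌉₊ ≤ n
              then ((kthSmallest
                  (Finset.univ.val.map
                    (fun i : Fin n =>
                      max (Qlo (X (Fin.castSucc i) ω) - Y (Fin.castSucc i) ω)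
                          (Y (Fin.castSucc i) ω - Qhi (X (Fin.castSucc i) ω))))
                  ⌈((n : ℝ) + 1) * (1 - α)⌉₊ : ℝ) : EReal)
              else (⊤ : EReal))
          ≤ ((Y (Fin.last n) ω : ℝ) : EReal)
        ∧ ((Y (Fin.last n) ω : ℝ) : EReal)
          ≤ ((Qhi (X (Fin.last n) ω) : ℝ) : EReal) +
            (if ⌈((n : ℝ) + 1) * (1 - α)⌉₊ ≤ n
              then ((kthSmallest
                  (Finset.univ.val.map
                    (fun i : Fin n =>
                      max (Qlo (X (Fin.castSucc i) ω) - Y (Fin.castSucc i) ω)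
                          (Y (Fin.castSucc i) ω - Qhi (X (Fin.castSucc i) ω))))
                  ⌈((n : ℝ) + 1) * (1 - α)⌉₊ : ℝ) : EReal)
              else (⊤ : EReal))}
      ≥ ENNReal.ofReal (1 - α) := by
  classical
  obtain ⟨hα0, hα1⟩ := hα
  set k := ⌈((n : ℝ) + 1) * (1 - α)⌉₊ with hkdef
  have hofReal_le_one : ENNReal.ofReal (1 - α) ≤ 1 := by
    rw [← ENNReal.ofReal_one]
    exact ENNReal.ofReal_le_ofReal (by linarith)
  by_cases hkn : k ≤ n
  swap
  · -- trivial case: q̂ = +∞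
    have hset : {ω : Ω |
        ((Qlo (X (Fin.last n) ω) : ℝ) : EReal) -
            (if k ≤ n
              then ((kthSmallest
                  (Finset.univ.val.map
                    (fun i : Fin n =>
                      max (Qlo (X (Fin.castSucc i) ω) - Y (Fin.castSucc i) ω)
                          (Y (Fin.castSucc i) ω - Qhi (X (Fin.castSucc i) ω))))
                  k : ℝ) : EReal)
              else (⊤ : EReal))
          ≤ ((Y (Fin.last n) ω : ℝ) : EReal)
        ∧ ((Y (Fin.last n) ω : ℝ) : EReal)
          ≤ ((Qhi (X (Fin.last n) ω) : ℝ) : EReal) +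
            (if k ≤ n
              then ((kthSmallest
                  (Finset.univ.val.map
                    (fun i : Fin n =>
                      max (Qlo (X (Fin.castSucc i) ω) - Y (Fin.castSucc i) ω)
                          (Y (Fin.castSucc i) ω - Qhi (X (Fin.castSucc i) ω))))
                  k : ℝ) : EReal)
              else (⊤ : EReal))} = Set.univ := by
      ext ω
      simp only [Set.mem_setOf_eq, Set.mem_univ, iff_true, if_neg hkn]
      constructor
      · rw [EReal.sub_top]
        exact bot_le
      · have : ((Qhi (X (Fin.last n) ω) : ℝ) : EReal) + ⊤ = ⊤ := by
          rw [EReal.add_top_of_ne_bot (EReal.coe_ne_bot _)]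
        rw [this]
        exact le_top
    rw [hset]
    simpa using hofReal_le_one
  · -- main case
    have hk1 : 1 ≤ k := by
      rw [hkdef]
      exact Nat.one_le_iff_ne_zero.2 (by
        have : (0 : ℝ) < ((n : ℝ) + 1) * (1 - α) := mul_pos (by positivity) (by linarith)
        simpa [Nat.ceil_eq_zero, not_le] using Nat.ceil_pos.2 this |>.ne')
    -- the score function
    set sc : (Fin D → ℝ) × ℝ → ℝ := fun p => max (Qlo p.1 - p.2) (p.2 - Qhi p.1) with hscdef
    have hsc : Measurable sc :=
      ((hQlo.comp measurable_fst).sub measurable_snd).max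
        (measurable_snd.sub (hQhi.comp measurable_fst))
    set plain : Ω → (Fin (n + 1) → (Fin D → ℝ) × ℝ) := fun ω i => (X i ω, Y i ω) with hplaindef
    have hplain : Measurable plain := measurable_pi_lambda _ (fun i => hXY i)
    set B : Fin (n + 1) → Set (Fin (n + 1) → (Fin D → ℝ) × ℝ) := fun j =>
      {v | (Finset.univ.filter fun i => sc (v i) < sc (v j)).card ≤ k - 1} with hBdef
    have hB : ∀ j, MeasurableSet (B j) := by
      intro j
      have hcard : Measurable fun v : Fin (n + 1) → (Fin D → ℝ) × ℝ =>
          (Finset.univ.filter fun i => sc (v i) < sc (v j)).card := by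
        simp_rw [Finset.card_filter]
        apply Finset.measurable_sum
        intro i _
        exact Measurable.ite
          (measurableSet_lt (hsc.comp (measurable_pi_apply i)) (hsc.comp (measurable_pi_apply j)))
          measurable_const measurable_const
      exact hcard (Set.to_countable {m : ℕ | m ≤ k - 1}).measurableSet
    set A : Fin (n + 1) → Set Ω := fun j => plain ⁻¹' B j with hAdef
    have hA : ∀ j, MeasurableSet (A j) := fun j => hplain (hB j)
    -- exchangeability gives equal probabilities
    have heq : ∀ j, μ (A j) = μ (A (Fin.last n)) := by
      intro j
      set σ : Equiv.Perm (Fin (n + 1)) := Equiv.swap j (Fin.last n) with hσdef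
      have hcomp : B j = (fun v => v ∘ σ) ⁻¹' B (Fin.last n) := by
        ext v
        simp only [hBdef, Set.mem_setOf_eq, Set.mem_preimage, Function.comp]
        have hσl : σ (Fin.last n) = j := Equiv.swap_apply_right j (Fin.last n)
        simp only [hσl]
        have hc : (Finset.univ.filter fun i => sc (v (σ i)) < sc (v j)).card
            = (Finset.univ.filter fun i => sc (v i) < sc (v j)).card := by
          apply Finset.card_bij' (fun i _ => σ i) (fun i _ => σ.symm i)
          · intro i hi
            simp only [Finset.mem_filter, Finset.mem_univ, true_and] at hi ⊢
            exact hi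
          · intro i hi
            simp only [Finset.mem_filter, Finset.mem_univ, true_and] at hi ⊢
            simpa using hi
          · intro i _; simp
          · intro i _; simp
        rw [hc]
      have hpermmeas : Measurable (fun ω => fun i => (X (σ i) ω, Y (σ i) ω)) :=
        measurable_pi_lambda _ (fun i => hXY (σ i))
      have hkey : A j = (fun ω => fun i => (X (σ i) ω, Y (σ i) ω)) ⁻¹' B (Fin.last n) := by
        rw [hAdef]
        simp only [hcomp, ← Set.preimage_comp]
        rfl
      rw [hkey, ← Measure.map_apply hpermmeas (hB (Fin.last n)), hexch σ,
        Measure.map_apply hplain (hB (Fin.last n))]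
    -- pointwise rank bound
    have hpoint : ∀ ω, (k : ℝ≥0∞) ≤ ∑ j, (A j).indicator (1 : Ω → ℝ≥0∞) ω := by
      intro ω
      have hsum : ∑ j, (A j).indicator (1 : Ω → ℝ≥0∞) ω
          = ((Finset.univ.filter fun j : Fin (n + 1) => ω ∈ A j).card : ℝ≥0∞) := by
        rw [Finset.card_filter, Nat.cast_sum]
        refine Finset.sum_congr rfl (fun j _ => ?_)
        by_cases h : ω ∈ A j <;> simp [Set.indicator_apply, h]
      rw [hsum]
      have := rank_count_ge (fun i => sc (plain ω i)) k (by omega)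
      have hsame : (Finset.univ.filter fun j : Fin (n + 1) => ω ∈ A j)
          = Finset.univ.filter fun j =>
              (Finset.univ.filter fun i => sc (plain ω i) < sc (plain ω j)).card ≤ k - 1 :=
        Finset.filter_congr (fun j _ => Iff.rfl)
      rw [hsame]
      exact_mod_cast this
    -- integrate
    have hint : (k : ℝ≥0∞) ≤ ∑ j, μ (A j) := by
      have h1 : (k : ℝ≥0∞) = ∫⁻ _, (k : ℝ≥0∞) ∂μ := by simp
      have h2 : ∫⁻ ω, (k : ℝ≥0∞) ∂μ ≤ ∫⁻ ω, ∑ j, (A j).indicator (1 : Ω → ℝ≥0∞) ω ∂μ :=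
        lintegral_mono hpoint
      have h3 : ∫⁻ ω, ∑ j, (A j).indicator (1 : Ω → ℝ≥0∞) ω ∂μ = ∑ j, μ (A j) := by
        rw [lintegral_finset_sum _ (fun j _ => measurable_one.indicator (hA j))]
        refine Finset.sum_congr rfl (fun j _ => ?_)
        exact lintegral_indicator_one (hA j)
      rw [h1]
      rw [h3] at h2
      exact h2
    have hsumconst : ∑ j : Fin (n + 1), μ (A j) = (n + 1 : ℝ≥0∞) * μ (A (Fin.last n)) := by
      rw [Finset.sum_congr rfl (fun j _ => heq j)]
      simp [Finset.sum_const, mul_comm]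
    rw [hsumconst] at hint
    -- identify the event with A (last)
    have hevent : {ω : Ω |
        ((Qlo (X (Fin.last n) ω) : ℝ) : EReal) -
            (if k ≤ n
              then ((kthSmallest
                  (Finset.univ.val.map
                    (fun i : Fin n =>
                      max (Qlo (X (Fin.castSucc i) ω) - Y (Fin.castSucc i) ω)
                          (Y (Fin.castSucc i) ω - Qhi (X (Fin.castSucc i) ω))))
                  k : ℝ) : EReal)
              else (⊤ : EReal))
          ≤ ((Y (Fin.last n) ω : ℝ) : EReal)
        ∧ ((Y (Fin.last n) ω : ℝ) : EReal)
          ≤ ((Qhi (X (Fin.last n) ω) : ℝ) : EReal) +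
            (if k ≤ n
              then ((kthSmallest
                  (Finset.univ.val.map
                    (fun i : Fin n =>
                      max (Qlo (X (Fin.castSucc i) ω) - Y (Fin.castSucc i) ω)
                          (Y (Fin.castSucc i) ω - Qhi (X (Fin.castSucc i) ω))))
                  k : ℝ) : EReal)
              else (⊤ : EReal))} = A (Fin.last n) := by
      ext ω
      simp only [Set.mem_setOf_eq, if_pos hkn]
      set m : Multiset ℝ := Finset.univ.val.map
          (fun i : Fin n =>
            max (Qlo (X (Fin.castSucc i) ω) - Y (Fin.castSucc i) ω)
                (Y (Fin.castSucc i) ω - Qhi (X (Fin.castSucc i) ω))) with hmdef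
      set q : ℝ := kthSmallest m k with hqdef
      set t : ℝ := sc (plain ω (Fin.last n)) with htdef
      have hstep1 :
          (((Qlo (X (Fin.last n) ω) : ℝ) : EReal) - (q : EReal) ≤ ((Y (Fin.last n) ω : ℝ) : EReal)
          ∧ ((Y (Fin.last n) ω : ℝ) : EReal) ≤ ((Qhi (X (Fin.last n) ω) : ℝ) : EReal) + (q : EReal))
          ↔ t ≤ q := by
        rw [← EReal.coe_sub, ← EReal.coe_add, EReal.coe_le_coe_iff, EReal.coe_le_coe_iff]
        constructor
        · rintro ⟨h1, h2⟩
          rw [htdef, hplaindef, hscdef]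
          simp only [max_le_iff]
          constructor <;> linarith
        · intro h
          rw [htdef, hplaindef, hscdef] at h
          simp only [max_le_iff] at h
          constructor <;> linarith
      rw [hstep1]
      have hcard : Multiset.card m = n := by
        rw [hmdef, Multiset.card_map]
        simp
      rw [le_kthSmallest_iff_s4 hk1 (by omega) t]
      have hfilter : (m.filter (· < t)).card
          = (Finset.univ.filter fun j : Fin (n + 1) => sc (plain ω j) < t).card := by
        have e1 : (m.filter (· < t)).card
            = (Finset.univ.filter fun i : Fin n =>
                sc (plain ω (Fin.castSucc i)) < t).card := by
          rw [hmdef, Multiset.filter_map, Multiset.card_map]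
          rfl
        rw [e1]
        have e2 : (Finset.univ : Finset (Fin (n + 1)))
            = insert (Fin.last n) (Finset.univ.map Fin.castSuccEmb) := by
          ext j
          simp only [Finset.mem_univ, Finset.mem_insert, Finset.mem_map, true_iff]
          rcases Fin.eq_castSucc_or_eq_last j with ⟨i, rfl⟩ | rfl
          · exact Or.inr ⟨i, trivial, rfl⟩
          · exact Or.inl rfl
        rw [e2, Finset.filter_insert, if_neg (by simp [htdef]), Finset.filter_map,
          Finset.card_map]
        rfl
      rw [hfilter]
      rfl
    rw [hevent]
    -- finish the arithmetic
    have hceil : ENNReal.ofReal (((n : ℝ) + 1) * (1 - α)) ≤ (k : ℝ≥0∞) := by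
      calc ENNReal.ofReal (((n : ℝ) + 1) * (1 - α)) ≤ ENNReal.ofReal (k : ℝ) :=
            ENNReal.ofReal_le_ofReal (Nat.le_ceil _)
        _ = (k : ℝ≥0∞) := ENNReal.ofReal_natCast k
    have hsplit : ENNReal.ofReal (((n : ℝ) + 1) * (1 - α))
        = (n + 1 : ℝ≥0∞) * ENNReal.ofReal (1 - α) := by
      rw [ENNReal.ofReal_mul (by positivity)]
      congr 1
      rw [show ((n : ℝ) + 1) = ((n + 1 : ℕ) : ℝ) by push_cast; ring, ENNReal.ofReal_natCast]
      push_cast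
      ring
    have hmain : (n + 1 : ℝ≥0∞) * ENNReal.ofReal (1 - α)
        ≤ (n + 1 : ℝ≥0∞) * μ (A (Fin.last n)) := by
      calc (n + 1 : ℝ≥0∞) * ENNReal.ofReal (1 - α)
          = ENNReal.ofReal (((n : ℝ) + 1) * (1 - α)) := hsplit.symm
        _ ≤ (k : ℝ≥0∞) := hceil
        _ ≤ (n + 1 : ℝ≥0∞) * μ (A (Fin.last n)) := hint
    have hne0 : (n + 1 : ℝ≥0∞) ≠ 0 := by simp
    have hnetop : (n + 1 : ℝ≥0∞) ≠ ⊤ := by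
      simp [ENNReal.add_ne_top]
    exact (ENNReal.mul_le_mul_iff_right hne0 hnetop).1 hmain
end
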